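/- Fix a positive integer k and let λ, μ, ν be integers with 0 ≤ λ, μ, ν ≤ k. Then ν appears in the level-k affine su(2) fusion product [λ]∗[μ] — i.e. λ+μ−ν is even and |λ−μ| ≤ ν ≤ min(λ+μ, 2k−λ−μ) — if and only if the set T_{λ,μ}^ν is nonempty and λ+μ−ν is even. -/

import Mathlib

open Matrix Complex Real

noncomputable section

/-- `SU(2)`: 2×2 complex unitary matrices with determinant 1. -/
def SU2 : Set (Matrix (Fin 2) (Fin 2) ℂ) :=
  {g | g ∈ Matrix.unitaryGroup (Fin 2) ℂ ∧ g.det = 1}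

/-- The diagonal matrix `t_λ = diag(exp(iπλ/k), exp(−iπλ/k))`. -/
def tmat (k : ℕ) (l : ℝ) : Matrix (Fin 2) (Fin 2) ℂ :=
  Matrix.diagonal ![Complex.exp (Complex.I * ((Real.pi * l / k : ℝ) : ℂ)),
    Complex.exp (-(Complex.I * ((Real.pi * l / k : ℝ) : ℂ)))]

/-- The conjugacy class `C_λ` of `t_λ` in `SU(2)`. -/
def conjClass (k : ℕ) (l : ℝ) : Set (Matrix (Fin 2) (Fin 2) ℂ) :=
  {g | ∃ x ∈ SU2, g = x * tmat k l * x⁻¹}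

/-- `T_{λ,μ}^ν = {(g,h) : g ∈ C_λ, h ∈ C_μ, g·h ∈ C_ν}`. -/
def Tset (k : ℕ) (l m n : ℝ) :
    Set (Matrix (Fin 2) (Fin 2) ℂ × Matrix (Fin 2) (Fin 2) ℂ) :=
  {p | p.1 ∈ conjClass k l ∧ p.2 ∈ conjClass k m ∧ p.1 * p.2 ∈ conjClass k n}

namespace Stmt2Aux

/-- `exp(iθ)` for real `θ`. -/
def Em (θ : ℝ) : ℂ := Complex.exp (Complex.I * (θ : ℂ))

lemma Em_apply (θ : ℝ) : Em θ = (Real.cos θ : ℂ) + (Real.sin θ : ℂ) * Complex.I := by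
  rw [Em, mul_comm, Complex.exp_mul_I]
  simp [Complex.ofReal_cos, Complex.ofReal_sin]

lemma Em_neg (θ : ℝ) : Em (-θ) = (Em θ)⁻¹ := by
  rw [Em, Em, ← Complex.exp_neg]
  push_cast
  ring_nf

lemma Em_ne_zero (θ : ℝ) : Em θ ≠ 0 := Complex.exp_ne_zero _

lemma Em_mul (a b : ℝ) : Em a * Em b = Em (a + b) := by
  rw [Em, Em, Em, ← Complex.exp_add]
  push_cast
  ring_nf

lemma conj_Em (θ : ℝ) : (starRingEnd ℂ) (Em θ) = Em (-θ) := by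
  rw [Em, Em, ← Complex.exp_conj]
  congr 1
  simp

lemma Em_add_neg (θ : ℝ) : Em θ + Em (-θ) = 2 * (Real.cos θ : ℂ) := by
  rw [Em_apply, Em_apply, Real.cos_neg, Real.sin_neg]
  push_cast
  ring

/-- diagonal matrix with angle `p`. -/
def Dmat (p : ℝ) : Matrix (Fin 2) (Fin 2) ℂ := !![Em p, 0; 0, Em (-p)]

lemma tmat_eq (k : ℕ) (l : ℝ) : tmat k l = Dmat (Real.pi * l / k) := by
  ext i j
  fin_cases i <;> fin_cases j <;>
    simp [tmat, Dmat, Matrix.diagonal, Em]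

/-- generic SU(2) element. -/
def suMk (a b : ℂ) : Matrix (Fin 2) (Fin 2) ℂ :=
  !![a, b; -(starRingEnd ℂ) b, (starRingEnd ℂ) a]

lemma star_suMk (a b : ℂ) :
    star (suMk a b) = !![(starRingEnd ℂ) a, -b; (starRingEnd ℂ) b, a] := by
  ext i j
  fin_cases i <;> fin_cases j <;>
    simp [suMk, Matrix.star_apply, Matrix.conjTranspose_apply]

lemma det_suMk (a b : ℂ) :
    (suMk a b).det = ((Complex.normSq a + Complex.normSq b : ℝ) : ℂ) := by
  rw [Matrix.det_fin_two]
  simp [suMk, Complex.mul_conj, ← Complex.normSq_eq_conj_mul_self]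

lemma suMk_mem_SU2 {a b : ℂ} (h : Complex.normSq a + Complex.normSq b = 1) :
    suMk a b ∈ SU2 := by
  refine ⟨?_, by rw [det_suMk, h]; norm_num⟩
  rw [Matrix.mem_unitaryGroup_iff, star_suMk, suMk, Matrix.mul_fin_two]
  ext i j
  fin_cases i <;> fin_cases j <;>
    simp [Matrix.one_apply, Complex.mul_conj, ← Complex.normSq_eq_conj_mul_self]
  · exact_mod_cast h
  · ring
  · ring
  · exact_mod_cast (by linarith : Complex.normSq b + Complex.normSq a = 1)

lemma one_mem_SU2 : (1 : Matrix (Fin 2) (Fin 2) ℂ) ∈ SU2 :=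
  ⟨Submonoid.one_mem _, Matrix.det_one⟩

lemma mul_mem_SU2 {g h : Matrix (Fin 2) (Fin 2) ℂ} (hg : g ∈ SU2) (hh : h ∈ SU2) :
    g * h ∈ SU2 :=
  ⟨mul_mem hg.1 hh.1, by rw [Matrix.det_mul, hg.2, hh.2, one_mul]⟩

lemma inv_eq_star {g : Matrix (Fin 2) (Fin 2) ℂ} (hg : g ∈ SU2) : g⁻¹ = star g :=
  Matrix.inv_eq_right_inv (Matrix.mem_unitaryGroup_iff.mp hg.1)

lemma inv_mem_SU2 {g : Matrix (Fin 2) (Fin 2) ℂ} (hg : g ∈ SU2) : g⁻¹ ∈ SU2 := by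
  rw [inv_eq_star hg]
  refine ⟨Unitary.star_mem hg.1, ?_⟩
  rw [Matrix.star_eq_conjTranspose, Matrix.det_conjTranspose, hg.2]
  exact star_one ℂ

lemma isUnit_det_SU2 {g : Matrix (Fin 2) (Fin 2) ℂ} (hg : g ∈ SU2) : IsUnit g.det := by
  rw [hg.2]; exact isUnit_one

/-- every SU(2) element has the standard form. -/
lemma exists_suMk {g : Matrix (Fin 2) (Fin 2) ℂ} (hg : g ∈ SU2) :
    ∃ a b : ℂ, Complex.normSq a + Complex.normSq b = 1 ∧ g = suMk a b := by
  have h1 : star g = g.adjugate := by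
    rw [← inv_eq_star hg, Matrix.inv_def, hg.2]
    simp
  rw [Matrix.adjugate_fin_two] at h1
  have e00 : (starRingEnd ℂ) (g 0 0) = g 1 1 := by
    have := congrFun (congrFun h1 0) 0
    simpa [Matrix.star_apply, Matrix.conjTranspose_apply] using this
  have e01 : (starRingEnd ℂ) (g 0 1) = -(g 1 0) := by
    have := congrFun (congrFun h1 1) 0
    simpa [Matrix.star_apply, Matrix.conjTranspose_apply] using this
  refine ⟨g 0 0, g 0 1, ?_, ?_⟩
  · have hdet := hg.2
    rw [Matrix.det_fin_two] at hdet
    have : (g 0 0) * (starRingEnd ℂ) (g 0 0) + (g 0 1) * (starRingEnd ℂ) (g 0 1) = 1 := by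
      rw [e00, e01]; linear_combination hdet
    rw [Complex.mul_conj, Complex.mul_conj] at this
    exact_mod_cast this
  · ext i j
    fin_cases i <;> fin_cases j <;> simp [suMk]
    · rw [e01]; ring
    · rw [e00]


lemma trace_formula (p q : ℝ) (a b : ℂ) :
    Matrix.trace (Dmat p * (suMk a b * Dmat q * star (suMk a b)))
      = (Complex.normSq a : ℂ) * (2 * ((Real.cos (p + q) : ℝ) : ℂ))
        + (Complex.normSq b : ℂ) * (2 * ((Real.cos (p - q) : ℝ) : ℂ)) := by
  have h1 : (2 : ℂ) * ((Real.cos (p + q) : ℝ) : ℂ) = Em p * Em q + Em (-p) * Em (-q) := by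
    rw [Em_mul, Em_mul, show -p + -q = -(p + q) by ring, Em_add_neg]
  have h2 : (2 : ℂ) * ((Real.cos (p - q) : ℝ) : ℂ) = Em p * Em (-q) + Em (-p) * Em q := by
    rw [Em_mul, Em_mul, show p + -q = p - q by ring, show -p + q = -(p - q) by ring,
      Em_add_neg]
  rw [h1, h2, ← Complex.mul_conj a, ← Complex.mul_conj b, star_suMk, suMk, Dmat, Dmat,
    Matrix.mul_fin_two, Matrix.mul_fin_two, Matrix.mul_fin_two, Matrix.trace_fin_two]
  simp only [Matrix.of_apply, Matrix.cons_val', Matrix.cons_val_zero, Matrix.cons_val_one,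
    Matrix.head_cons, Matrix.empty_val', Matrix.cons_val_fin_one, Matrix.head_fin_const]
  ring

lemma trace_tmat (k : ℕ) (n : ℝ) :
    (tmat k n).trace = 2 * ((Real.cos (Real.pi * n / k) : ℝ) : ℂ) := by
  rw [tmat_eq, Dmat, Matrix.trace_fin_two]
  show Em _ + Em _ = _
  exact Em_add_neg _

lemma trace_conjClass {k : ℕ} {n : ℝ} {g : Matrix (Fin 2) (Fin 2) ℂ}
    (h : g ∈ conjClass k n) :
    g.trace = 2 * ((Real.cos (Real.pi * n / k) : ℝ) : ℂ) := by
  obtain ⟨x, hx, rfl⟩ := h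
  rw [Matrix.trace_mul_comm, ← Matrix.mul_assoc,
    Matrix.nonsing_inv_mul _ (isUnit_det_SU2 hx), Matrix.one_mul, trace_tmat]

lemma tmat_mem_SU2 (k : ℕ) (l : ℝ) : tmat k l ∈ SU2 := by
  have h : tmat k l = suMk (Em (Real.pi * l / k)) 0 := by
    rw [tmat_eq]
    ext i j
    fin_cases i <;> fin_cases j <;> simp [Dmat, suMk, conj_Em]
  rw [h]
  apply suMk_mem_SU2
  simp [Em, Complex.normSq_eq_norm_sq, Complex.norm_exp]

set_option maxHeartbeats 1000000 in
lemma mem_conjClass_of_trace {k : ℕ} (hk : 0 < k) {n : ℝ} (hn0 : 0 ≤ n) (hnk : n ≤ k)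
    {m : Matrix (Fin 2) (Fin 2) ℂ} (hm : m ∈ SU2)
    (htr : m.trace = 2 * ((Real.cos (Real.pi * n / k) : ℝ) : ℂ)) : m ∈ conjClass k n := by
  obtain ⟨a, b, hab, rfl⟩ := exists_suMk hm
  set c : ℝ := Real.pi * n / k with hc
  have hkR : (0 : ℝ) < k := by exact_mod_cast hk
  have hc0 : 0 ≤ c := by
    apply div_nonneg (mul_nonneg Real.pi_pos.le hn0) hkR.le
  have hcpi : c ≤ Real.pi := by
    rw [hc, div_le_iff₀ hkR]
    nlinarith [Real.pi_pos]
  set s : ℝ := Real.sin c with hs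
  have hs0 : 0 ≤ s := Real.sin_nonneg_of_nonneg_of_le_pi hc0 hcpi
  -- extract the real part of a
  have htrace : a + (starRingEnd ℂ) a = 2 * ((Real.cos c : ℝ) : ℂ) := by
    rw [← htr, suMk, Matrix.trace_fin_two]
    simp
  have hre : a.re = Real.cos c := by
    rw [Complex.add_conj] at htrace
    have h2 : (2 * a.re : ℝ) = 2 * Real.cos c := by exact_mod_cast htrace
    linarith
  set y : ℝ := a.im with hy
  have key : y ^ 2 + Complex.normSq b = s ^ 2 := by
    have h1 : a.re ^ 2 + y ^ 2 + Complex.normSq b = 1 := by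
      have := hab
      rw [Complex.normSq_apply] at this
      nlinarith [this]
    rw [hre] at h1
    nlinarith [Real.sin_sq_add_cos_sq c]
  have hA : a = ((Real.cos c : ℝ) : ℂ) + ((y : ℝ) : ℂ) * Complex.I := by
    rw [← hre]
    exact (Complex.re_add_im a).symm
  have hA' : (starRingEnd ℂ) a = ((Real.cos c : ℝ) : ℂ) - ((y : ℝ) : ℂ) * Complex.I := by
    rw [hA, map_add, _root_.map_mul, Complex.conj_I, Complex.conj_ofReal, Complex.conj_ofReal]
    ring
  have hEc : Em c = ((Real.cos c : ℝ) : ℂ) + ((s : ℝ) : ℂ) * Complex.I := Em_apply c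
  have hEc' : Em (-c) = ((Real.cos c : ℝ) : ℂ) - ((s : ℝ) : ℂ) * Complex.I := by
    rw [Em_apply, Real.cos_neg, Real.sin_neg, ← hs, Complex.ofReal_neg]
    ring
  by_cases hsy : s - y = 0
  · -- diagonal case : b = 0 and a = Em c
    have hb : b = 0 := by
      have : Complex.normSq b = 0 := by nlinarith [key]
      exact Complex.normSq_eq_zero.mp this
    have hys : y = s := by linarith
    refine ⟨1, one_mem_SU2, ?_⟩
    rw [Matrix.one_mul, inv_one, Matrix.mul_one, tmat_eq, ← hc]
    have ha2 : a = Em c := by rw [hA, hys, hEc]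
    have ha3 : (starRingEnd ℂ) a = Em (-c) := by rw [hA', hys, hEc']
    ext i j
    fin_cases i <;> fin_cases j <;>
      simp [suMk, Dmat, hb, ha2, ha3, conj_Em]
  · -- generic case
    have hy_le : y ≤ s := by nlinarith [Complex.normSq_nonneg b, key, sq_nonneg (y - s), sq_nonneg (y + s)]
    have hylt : y < s := lt_of_le_of_ne hy_le (fun h => hsy (by rw [h]; ring))
    have hspos : 0 < s := by
      rcases hs0.lt_or_eq with h | h
      · exact h
      · exfalso
        have hkey2 : y ^ 2 + Complex.normSq b = 0 := by rw [key, ← h]; ring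
        have h1 : y ^ 2 = 0 :=
          le_antisymm (by linarith [Complex.normSq_nonneg b]) (sq_nonneg y)
        have h2 : y = 0 := pow_eq_zero_iff (by norm_num : (2 : ℕ) ≠ 0) |>.mp h1
        exact hsy (by rw [← h, h2]; ring)
    set N : ℝ := Real.sqrt (2 * s * (s - y)) with hN
    have hNpos : 0 < N := Real.sqrt_pos.mpr (by nlinarith)
    have hN2 : N ^ 2 = 2 * s * (s - y) := Real.sq_sqrt (by nlinarith)
    have hNC : ((N : ℝ) : ℂ) ≠ 0 := by exact_mod_cast hNpos.ne'
    have hbb : b * (starRingEnd ℂ) b = ((s : ℝ) : ℂ) ^ 2 - ((y : ℝ) : ℂ) ^ 2 := by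
      rw [Complex.mul_conj]
      have : Complex.normSq b = s ^ 2 - y ^ 2 := by linarith [key]
      rw [this]
      push_cast
      ring
    set x0 : Matrix (Fin 2) (Fin 2) ℂ :=
      !![b, Complex.I * ((s - y : ℝ) : ℂ); Complex.I * ((s - y : ℝ) : ℂ), (starRingEnd ℂ) b]
      with hx0
    have hmain : suMk a b * x0 = x0 * Dmat c := by
      rw [suMk, hx0, Matrix.mul_fin_two, Dmat, Matrix.mul_fin_two]
      ext i j
      fin_cases i <;> fin_cases j <;>
        simp only [Fin.zero_eta, Fin.mk_one, Fin.isValue, Matrix.of_apply, Matrix.cons_val',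
          Matrix.cons_val_zero, Matrix.cons_val_one, Matrix.head_cons, Matrix.empty_val',
          Matrix.cons_val_fin_one, Matrix.head_fin_const]
      · rw [hA, hEc]; push_cast; ring
      · rw [hA, hEc']
        push_cast
        linear_combination hbb + (((s : ℝ) : ℂ) ^ 2 - ((y : ℝ) : ℂ) ^ 2) * Complex.I_sq
      · rw [hA', hEc]
        push_cast
        linear_combination -hbb - (((s : ℝ) : ℂ) ^ 2 - ((y : ℝ) : ℂ) ^ 2) * Complex.I_sq
      · rw [hA', hEc']; push_cast; ring
    set x : Matrix (Fin 2) (Fin 2) ℂ := suMk (b / ((N : ℝ) : ℂ)) (Complex.I * ((s - y : ℝ) : ℂ) / ((N : ℝ) : ℂ)) with hxdef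
    have hxmem : x ∈ SU2 := by
      apply suMk_mem_SU2
      have h3 : Complex.normSq b = s ^ 2 - y ^ 2 := by linarith [key]
      rw [Complex.normSq_div, Complex.normSq_div, Complex.normSq_mul, Complex.normSq_I,
        Complex.normSq_ofReal, Complex.normSq_ofReal, h3, one_mul]
      have hNN : N * N ≠ 0 := by positivity
      field_simp
      nlinarith [hN2]
    have hxeq : x = (((N : ℝ) : ℂ)⁻¹) • x0 := by
      rw [hxdef, hx0, suMk]
      ext i j
      fin_cases i <;> fin_cases j <;>
        simp [Matrix.smul_apply, div_eq_inv_mul, _root_.map_mul, Complex.conj_I,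
          Complex.conj_ofReal, map_div₀]
    have hmx : suMk a b * x = x * tmat k n := by
      rw [tmat_eq, ← hc, hxeq, Matrix.mul_smul, Matrix.smul_mul, hmain]
    refine ⟨x, hxmem, ?_⟩
    have hxu : IsUnit x.det := isUnit_det_SU2 hxmem
    calc suMk a b = suMk a b * (x * x⁻¹) := by
          rw [Matrix.mul_nonsing_inv _ hxu, Matrix.mul_one]
      _ = (suMk a b * x) * x⁻¹ := by rw [Matrix.mul_assoc]
      _ = x * tmat k n * x⁻¹ := by rw [hmx]

end Stmt2Aux

section MainHelpers

open Stmt2Aux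

lemma angle_le_iff {K : ℝ} (hK : 0 < K) {r t : ℝ} :
    Real.pi * r / K ≤ Real.pi * t / K ↔ r ≤ t := by
  have h1 : Real.pi * r / K = r * (Real.pi / K) := by ring
  have h2 : Real.pi * t / K = t * (Real.pi / K) := by ring
  rw [h1, h2, mul_le_mul_iff_of_pos_right (div_pos Real.pi_pos hK)]

lemma angle_nonneg {K : ℝ} (hK : 0 < K) {r : ℝ} (hr : 0 ≤ r) :
    0 ≤ Real.pi * r / K :=
  div_nonneg (mul_nonneg Real.pi_pos.le hr) hK.le

lemma angle_le_pi {K : ℝ} (hK : 0 < K) {r : ℝ} (hr : r ≤ K) :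
    Real.pi * r / K ≤ Real.pi := by
  rw [div_le_iff₀ hK]
  nlinarith [Real.pi_pos]

end MainHelpers

open Stmt2Aux in
set_option maxHeartbeats 1600000 in
theorem stmt2 (k : ℕ) (hk : 0 < k) (lam mu nu : ℤ)
    (hlam : 0 ≤ lam ∧ lam ≤ k) (hmu : 0 ≤ mu ∧ mu ≤ k) (hnu : 0 ≤ nu ∧ nu ≤ k) :
    (Even (lam + mu - nu) ∧
        |lam - mu| ≤ nu ∧ nu ≤ min (lam + mu) (2 * k - lam - mu)) ↔
      ((Tset k (lam : ℝ) (mu : ℝ) (nu : ℝ)).Nonempty ∧ Even (lam + mu - nu)) := by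
  obtain ⟨hl0, hlk⟩ := hlam
  obtain ⟨hm0, hmk⟩ := hmu
  obtain ⟨hn0, hnk⟩ := hnu
  have hkR : (0 : ℝ) < (k : ℝ) := by exact_mod_cast hk
  have hπ := Real.pi_pos
  have hlR : (0:ℝ) ≤ (lam:ℝ) := by exact_mod_cast hl0
  have hlkR : (lam:ℝ) ≤ (k:ℝ) := by exact_mod_cast hlk
  have hmR : (0:ℝ) ≤ (mu:ℝ) := by exact_mod_cast hm0
  have hmkR : (mu:ℝ) ≤ (k:ℝ) := by exact_mod_cast hmk
  have hnR : (0:ℝ) ≤ (nu:ℝ) := by exact_mod_cast hn0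
  have hnkR : (nu:ℝ) ≤ (k:ℝ) := by exact_mod_cast hnk
  have hc0 : 0 ≤ Real.pi * (nu:ℝ) / (k:ℝ) := angle_nonneg hkR hnR
  have hcπ : Real.pi * (nu:ℝ) / (k:ℝ) ≤ Real.pi := angle_le_pi hkR hnkR
  have hp0 : 0 ≤ Real.pi * (lam:ℝ) / (k:ℝ) := angle_nonneg hkR hlR
  have hpπ : Real.pi * (lam:ℝ) / (k:ℝ) ≤ Real.pi := angle_le_pi hkR hlkR
  have hq0 : 0 ≤ Real.pi * (mu:ℝ) / (k:ℝ) := angle_nonneg hkR hmR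
  have hqπ : Real.pi * (mu:ℝ) / (k:ℝ) ≤ Real.pi := angle_le_pi hkR hmkR
  have hpq : Real.pi * (lam:ℝ) / (k:ℝ) + Real.pi * (mu:ℝ) / (k:ℝ)
      = Real.pi * ((lam:ℝ) + (mu:ℝ)) / (k:ℝ) := by ring
  have hpq' : Real.pi * (lam:ℝ) / (k:ℝ) - Real.pi * (mu:ℝ) / (k:ℝ)
      = Real.pi * ((lam:ℝ) - (mu:ℝ)) / (k:ℝ) := by ring
  have habsd : |Real.pi * ((lam:ℝ) - (mu:ℝ)) / (k:ℝ)| = Real.pi * |(lam:ℝ) - (mu:ℝ)| / (k:ℝ) := by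
    rw [abs_div, abs_mul, _root_.abs_of_nonneg Real.pi_pos.le, _root_.abs_of_nonneg hkR.le]
  constructor
  · rintro ⟨hev, h1, h2⟩
    refine ⟨?_, hev⟩
    obtain ⟨h2a, h2b⟩ := le_min_iff.mp h2
    -- cos c ≤ cos (p - q)
    have hleabs : |(lam:ℝ) - (mu:ℝ)| ≤ (nu:ℝ) := by
      have : ((|lam - mu| : ℤ) : ℝ) ≤ ((nu : ℤ) : ℝ) := by exact_mod_cast h1
      rwa [Int.cast_abs, Int.cast_sub] at this
    have hcs2 : Real.cos (Real.pi * (nu:ℝ) / (k:ℝ))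
        ≤ Real.cos (Real.pi * (lam:ℝ) / (k:ℝ) - Real.pi * (mu:ℝ) / (k:ℝ)) := by
      rw [hpq', ← Real.cos_abs (Real.pi * ((lam:ℝ) - (mu:ℝ)) / (k:ℝ)), habsd]
      exact Real.cos_le_cos_of_nonneg_of_le_pi
        (angle_nonneg hkR (abs_nonneg _)) hcπ ((angle_le_iff hkR).mpr hleabs)
    have hcs1 : Real.cos (Real.pi * (lam:ℝ) / (k:ℝ) + Real.pi * (mu:ℝ) / (k:ℝ))
        ≤ Real.cos (Real.pi * (nu:ℝ) / (k:ℝ)) := by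
      rw [hpq]
      by_cases hcase : lam + mu ≤ (k : ℤ)
      · have hy : Real.pi * ((lam:ℝ) + (mu:ℝ)) / (k:ℝ) ≤ Real.pi := by
          apply angle_le_pi hkR
          exact_mod_cast hcase
        have hxy : Real.pi * (nu:ℝ) / (k:ℝ) ≤ Real.pi * ((lam:ℝ) + (mu:ℝ)) / (k:ℝ) := by
          apply (angle_le_iff hkR).mpr
          exact_mod_cast h2a
        exact Real.cos_le_cos_of_nonneg_of_le_pi hc0 hy hxy
      · push_neg at hcase
        have hflip : Real.cos (Real.pi * ((lam:ℝ) + (mu:ℝ)) / (k:ℝ))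
            = Real.cos (2 * Real.pi - Real.pi * ((lam:ℝ) + (mu:ℝ)) / (k:ℝ)) := by
          rw [Real.cos_two_pi_sub]
        have hid : 2 * Real.pi - Real.pi * ((lam:ℝ) + (mu:ℝ)) / (k:ℝ)
            = Real.pi * ((2 * (k:ℝ) - (lam:ℝ) - (mu:ℝ))) / (k:ℝ) := by
          field_simp
          ring
        rw [hflip, hid]
        have hy : Real.pi * (2 * (k:ℝ) - (lam:ℝ) - (mu:ℝ)) / (k:ℝ) ≤ Real.pi := by
          apply angle_le_pi hkR
          have : (k:ℝ) < (lam:ℝ) + (mu:ℝ) := by exact_mod_cast hcase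
          linarith
        have hxy : Real.pi * (nu:ℝ) / (k:ℝ)
            ≤ Real.pi * (2 * (k:ℝ) - (lam:ℝ) - (mu:ℝ)) / (k:ℝ) := by
          apply (angle_le_iff hkR).mpr
          have : ((nu : ℤ) : ℝ) ≤ ((2 * (k:ℤ) - lam - mu : ℤ) : ℝ) := by exact_mod_cast h2b
          push_cast at this
          linarith
        exact Real.cos_le_cos_of_nonneg_of_le_pi hc0 hy hxy
    -- convex combination
    have horder := hcs1.trans hcs2
    have hmem : Real.cos (Real.pi * (nu:ℝ) / (k:ℝ)) ∈
        segment ℝ (Real.cos (Real.pi * (lam:ℝ) / (k:ℝ) + Real.pi * (mu:ℝ) / (k:ℝ)))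
          (Real.cos (Real.pi * (lam:ℝ) / (k:ℝ) - Real.pi * (mu:ℝ) / (k:ℝ))) := by
      rw [segment_eq_Icc horder]
      exact ⟨hcs1, hcs2⟩
    obtain ⟨u, v, hu, hv, huv, hsum⟩ := hmem
    rw [_root_.smul_eq_mul, _root_.smul_eq_mul] at hsum
    set x := suMk ((Real.sqrt u : ℝ) : ℂ) ((Real.sqrt v : ℝ) : ℂ) with hxdef
    have hxmem : x ∈ SU2 := by
      apply suMk_mem_SU2
      rw [Complex.normSq_ofReal, Complex.normSq_ofReal,
        Real.mul_self_sqrt hu, Real.mul_self_sqrt hv, huv]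
    refine ⟨(tmat k (lam:ℝ), x * tmat k (mu:ℝ) * x⁻¹), ?_, ?_, ?_⟩
    · exact ⟨1, one_mem_SU2, by rw [Matrix.one_mul, inv_one, Matrix.mul_one]⟩
    · exact ⟨x, hxmem, rfl⟩
    · apply mem_conjClass_of_trace hk hnR hnkR
      · exact mul_mem_SU2 (tmat_mem_SU2 _ _)
          (mul_mem_SU2 (mul_mem_SU2 hxmem (tmat_mem_SU2 _ _)) (inv_mem_SU2 hxmem))
      · rw [show (tmat k (lam:ℝ), x * tmat k (mu:ℝ) * x⁻¹).1 * (tmat k (lam:ℝ), x * tmat k (mu:ℝ) * x⁻¹).2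
            = tmat k (lam:ℝ) * (x * tmat k (mu:ℝ) * x⁻¹) from rfl]
        rw [inv_eq_star hxmem, hxdef, tmat_eq k (lam:ℝ), tmat_eq k (mu:ℝ), trace_formula]
        rw [Complex.normSq_ofReal, Complex.normSq_ofReal,
          Real.mul_self_sqrt hu, Real.mul_self_sqrt hv]
        have hsC : ((u * Real.cos (Real.pi * (lam:ℝ) / (k:ℝ) + Real.pi * (mu:ℝ) / (k:ℝ))
            + v * Real.cos (Real.pi * (lam:ℝ) / (k:ℝ) - Real.pi * (mu:ℝ) / (k:ℝ)) : ℝ) : ℂ)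
            = ((Real.cos (Real.pi * (nu:ℝ) / (k:ℝ)) : ℝ) : ℂ) := by
          exact_mod_cast congrArg (fun r : ℝ => (r : ℂ)) hsum
        push_cast at hsC ⊢
        linear_combination 2 * hsC
  · rintro ⟨⟨⟨g, h⟩, hg, hh, hgh⟩, hev⟩
    refine ⟨hev, ?_⟩
    obtain ⟨yM, hy, rfl⟩ := hg
    obtain ⟨zM, hz, rfl⟩ := hh
    have htr := trace_conjClass hgh
    have hw : yM⁻¹ * zM ∈ SU2 := mul_mem_SU2 (inv_mem_SU2 hy) hz
    obtain ⟨α, β, hαβ, hwmk⟩ := exists_suMk hw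
    have hwinv : (yM⁻¹ * zM)⁻¹ = zM⁻¹ * yM := by
      rw [Matrix.mul_inv_rev, Matrix.nonsing_inv_nonsing_inv _ (isUnit_det_SU2 hy)]
    have htr2 : (yM * tmat k (lam:ℝ) * yM⁻¹ * (zM * tmat k (mu:ℝ) * zM⁻¹)).trace
        = (tmat k (lam:ℝ) * ((yM⁻¹ * zM) * tmat k (mu:ℝ) * star (yM⁻¹ * zM))).trace := by
      rw [← inv_eq_star hw, hwinv]
      rw [show yM * tmat k (lam:ℝ) * yM⁻¹ * (zM * tmat k (mu:ℝ) * zM⁻¹)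
          = yM * (tmat k (lam:ℝ) * yM⁻¹ * (zM * tmat k (mu:ℝ) * zM⁻¹)) by
        simp only [Matrix.mul_assoc]]
      rw [Matrix.trace_mul_comm]
      congr 1
      simp only [Matrix.mul_assoc]
    have htrval : (tmat k (lam:ℝ) * ((yM⁻¹ * zM) * tmat k (mu:ℝ) * star (yM⁻¹ * zM))).trace
        = (Complex.normSq α : ℂ) *
            (2 * ((Real.cos (Real.pi * (lam:ℝ) / (k:ℝ) + Real.pi * (mu:ℝ) / (k:ℝ)) : ℝ) : ℂ))
          + (Complex.normSq β : ℂ) *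
            (2 * ((Real.cos (Real.pi * (lam:ℝ) / (k:ℝ) - Real.pi * (mu:ℝ) / (k:ℝ)) : ℝ) : ℂ)) := by
      rw [hwmk, tmat_eq k (lam:ℝ), tmat_eq k (mu:ℝ)]
      exact trace_formula _ _ _ _
    have hcomb : Real.cos (Real.pi * (nu:ℝ) / (k:ℝ))
        = Complex.normSq α * Real.cos (Real.pi * (lam:ℝ) / (k:ℝ) + Real.pi * (mu:ℝ) / (k:ℝ))
          + Complex.normSq β * Real.cos (Real.pi * (lam:ℝ) / (k:ℝ) - Real.pi * (mu:ℝ) / (k:ℝ)) := by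
      have hceq := htr.symm.trans (htr2.trans htrval)
      have h3 : 2 * Real.cos (Real.pi * (nu:ℝ) / (k:ℝ))
          = Complex.normSq α * (2 * Real.cos (Real.pi * (lam:ℝ) / (k:ℝ) + Real.pi * (mu:ℝ) / (k:ℝ)))
            + Complex.normSq β * (2 * Real.cos (Real.pi * (lam:ℝ) / (k:ℝ) - Real.pi * (mu:ℝ) / (k:ℝ))) := by
        exact_mod_cast hceq
      linarith
    -- monotone bounds
    have hdiff : 0 ≤ Real.cos (Real.pi * (lam:ℝ) / (k:ℝ) - Real.pi * (mu:ℝ) / (k:ℝ))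
        - Real.cos (Real.pi * (lam:ℝ) / (k:ℝ) + Real.pi * (mu:ℝ) / (k:ℝ)) := by
      have hexp : Real.cos (Real.pi * (lam:ℝ) / (k:ℝ) - Real.pi * (mu:ℝ) / (k:ℝ))
          - Real.cos (Real.pi * (lam:ℝ) / (k:ℝ) + Real.pi * (mu:ℝ) / (k:ℝ))
          = 2 * Real.sin (Real.pi * (lam:ℝ) / (k:ℝ)) * Real.sin (Real.pi * (mu:ℝ) / (k:ℝ)) := by
        rw [Real.cos_sub, Real.cos_add]
        ring
      rw [hexp]
      have hsp := Real.sin_nonneg_of_nonneg_of_le_pi hp0 hpπ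
      have hsq := Real.sin_nonneg_of_nonneg_of_le_pi hq0 hqπ
      positivity
    have e1 : Real.cos (Real.pi * (nu:ℝ) / (k:ℝ))
        - Real.cos (Real.pi * (lam:ℝ) / (k:ℝ) + Real.pi * (mu:ℝ) / (k:ℝ))
        = Complex.normSq β * (Real.cos (Real.pi * (lam:ℝ) / (k:ℝ) - Real.pi * (mu:ℝ) / (k:ℝ))
          - Real.cos (Real.pi * (lam:ℝ) / (k:ℝ) + Real.pi * (mu:ℝ) / (k:ℝ))) := by
      linear_combination hcomb
        + Real.cos (Real.pi * (lam:ℝ) / (k:ℝ) + Real.pi * (mu:ℝ) / (k:ℝ)) * hαβ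
    have e2 : Real.cos (Real.pi * (lam:ℝ) / (k:ℝ) - Real.pi * (mu:ℝ) / (k:ℝ))
        - Real.cos (Real.pi * (nu:ℝ) / (k:ℝ))
        = Complex.normSq α * (Real.cos (Real.pi * (lam:ℝ) / (k:ℝ) - Real.pi * (mu:ℝ) / (k:ℝ))
          - Real.cos (Real.pi * (lam:ℝ) / (k:ℝ) + Real.pi * (mu:ℝ) / (k:ℝ))) := by
      linear_combination (-1 : ℝ) * hcomb
        - Real.cos (Real.pi * (lam:ℝ) / (k:ℝ) - Real.pi * (mu:ℝ) / (k:ℝ)) * hαβ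
    have hlb : Real.cos (Real.pi * (lam:ℝ) / (k:ℝ) + Real.pi * (mu:ℝ) / (k:ℝ))
        ≤ Real.cos (Real.pi * (nu:ℝ) / (k:ℝ)) := by
      have := mul_nonneg (Complex.normSq_nonneg β) hdiff
      linarith [e1]
    have hub : Real.cos (Real.pi * (nu:ℝ) / (k:ℝ))
        ≤ Real.cos (Real.pi * (lam:ℝ) / (k:ℝ) - Real.pi * (mu:ℝ) / (k:ℝ)) := by
      have := mul_nonneg (Complex.normSq_nonneg α) hdiff
      linarith [e2]
    -- conclude the integer inequalities
    have habs_le_k : |lam - mu| ≤ (k : ℤ) := by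
      rw [abs_le]
      omega
    have hfirst : |lam - mu| ≤ nu := by
      by_contra hcon
      push_neg at hcon
      have hrlt : Real.pi * (nu:ℝ) / (k:ℝ) < Real.pi * |(lam:ℝ) - (mu:ℝ)| / (k:ℝ) := by
        have h1 : (nu:ℝ) < |(lam:ℝ) - (mu:ℝ)| := by
          have : ((nu:ℤ):ℝ) < ((|lam - mu| :ℤ):ℝ) := by exact_mod_cast hcon
          rwa [Int.cast_abs, Int.cast_sub] at this
        have := (angle_le_iff (r := |(lam:ℝ) - (mu:ℝ)|) (t := (nu:ℝ)) hkR)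
        by_contra hc2
        push_neg at hc2
        linarith [this.mp hc2]
      have habs_pi : Real.pi * |(lam:ℝ) - (mu:ℝ)| / (k:ℝ) ≤ Real.pi := by
        apply angle_le_pi hkR
        have : ((|lam - mu| :ℤ):ℝ) ≤ ((k:ℤ):ℝ) := by exact_mod_cast habs_le_k
        rw [Int.cast_abs, Int.cast_sub] at this
        simpa using this
      have hstrict := Real.strictAntiOn_cos
        ⟨hc0, hcπ⟩ ⟨angle_nonneg hkR (abs_nonneg _), habs_pi⟩ hrlt
      rw [← habsd, Real.cos_abs, ← hpq'] at hstrict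
      linarith
    refine ⟨hfirst, le_min_iff.mpr ⟨?_, ?_⟩⟩
    · by_cases hcase : lam + mu ≤ (k:ℤ)
      · by_contra hcon
        push_neg at hcon
        have hrlt : Real.pi * ((lam:ℝ) + (mu:ℝ)) / (k:ℝ) < Real.pi * (nu:ℝ) / (k:ℝ) := by
          have h1 : (lam:ℝ) + (mu:ℝ) < (nu:ℝ) := by
            have : ((lam + mu :ℤ):ℝ) < ((nu:ℤ):ℝ) := by exact_mod_cast hcon
            push_cast at this
            linarith
          by_contra hc2
          push_neg at hc2
          linarith [(angle_le_iff (r := (nu:ℝ)) (t := (lam:ℝ) + (mu:ℝ)) hkR).mp hc2]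
        have hsum_pi : Real.pi * ((lam:ℝ) + (mu:ℝ)) / (k:ℝ) ≤ Real.pi := by
          apply angle_le_pi hkR
          have : ((lam + mu :ℤ):ℝ) ≤ ((k:ℤ):ℝ) := by exact_mod_cast hcase
          push_cast at this
          linarith
        have hsum0 : 0 ≤ Real.pi * ((lam:ℝ) + (mu:ℝ)) / (k:ℝ) :=
          angle_nonneg hkR (by linarith)
        have hstrict := Real.strictAntiOn_cos ⟨hsum0, hsum_pi⟩ ⟨hc0, hcπ⟩ hrlt
        rw [← hpq] at hstrict
        linarith
      · push_neg at hcase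
        omega
    · by_cases hcase : lam + mu ≤ (k:ℤ)
      · omega
      · push_neg at hcase
        by_contra hcon
        push_neg at hcon
        have hid : 2 * Real.pi - Real.pi * ((lam:ℝ) + (mu:ℝ)) / (k:ℝ)
            = Real.pi * ((2 * (k:ℝ) - (lam:ℝ) - (mu:ℝ))) / (k:ℝ) := by
          field_simp
          ring
        have hrlt : Real.pi * (2 * (k:ℝ) - (lam:ℝ) - (mu:ℝ)) / (k:ℝ)
            < Real.pi * (nu:ℝ) / (k:ℝ) := by
          have h1 : 2 * (k:ℝ) - (lam:ℝ) - (mu:ℝ) < (nu:ℝ) := by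
            have : ((2 * (k:ℤ) - lam - mu :ℤ):ℝ) < ((nu:ℤ):ℝ) := by exact_mod_cast hcon
            push_cast at this
            linarith
          by_contra hc2
          push_neg at hc2
          linarith [(angle_le_iff (r := (nu:ℝ)) (t := 2 * (k:ℝ) - (lam:ℝ) - (mu:ℝ)) hkR).mp hc2]
        have hsum_pi : Real.pi * (2 * (k:ℝ) - (lam:ℝ) - (mu:ℝ)) / (k:ℝ) ≤ Real.pi := by
          apply angle_le_pi hkR
          have : ((k:ℤ):ℝ) < ((lam + mu :ℤ):ℝ) := by exact_mod_cast hcase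
          push_cast at this
          linarith
        have hsum0 : 0 ≤ Real.pi * (2 * (k:ℝ) - (lam:ℝ) - (mu:ℝ)) / (k:ℝ) := by
          apply angle_nonneg hkR
          have h1 : ((lam + mu : ℤ) : ℝ) ≤ ((2 * (k:ℤ) : ℤ) : ℝ) := by
            exact_mod_cast (by omega : lam + mu ≤ 2 * (k:ℤ))
          push_cast at h1
          linarith
        have hstrict := Real.strictAntiOn_cos ⟨hsum0, hsum_pi⟩ ⟨hc0, hcπ⟩ hrlt
        rw [← hid, Real.cos_two_pi_sub, ← hpq] at hstrict
        linarith
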